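/- Define the symmetric-gradient distortion on the positive orthant of ℝ³ by f(σ₁,σ₂,σ₃) = (1/2)·∑ⱼ₌₁³ σⱼ² − log(σ₁σ₂σ₃), and its symmetrization f^Sym(σ) = (1/2)·f(σ) + (1/2)·(σ₁σ₂σ₃)·f(1/σ₁,1/σ₂,1/σ₃). Then for every t > 0, f^Sym(t,t,t) = (3/4)·t² − (3/2)·log t + (3/4)·t + (3/2)·t³·log t; in particular f^Sym(1,1,1) = 3/2 while f^Sym(3/5, 3/5, 3/5) < 3/2. Hence (1,1,1) is not a minimizer of f^Sym over the positive orthant, so the symmetrized symmetric-gradient energy does not favor isometry. -/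
import Mathlib


/-- The symmetric-gradient distortion in singular values (3D). -/
noncomputable def fSG (a b c : ℝ) : ℝ :=
  (1/2) * (a^2 + b^2 + c^2) - Real.log (a * b * c)

/-- The symmetrized symmetric-gradient distortion. -/
noncomputable def fSymSG (a b c : ℝ) : ℝ :=
  (1/2) * fSG a b c + (1/2) * (a * b * c) * fSG a⁻¹ b⁻¹ c⁻¹

lemma diag (t : ℝ) (ht : 0 < t) : fSymSG t t t =
    (3/4) * t^2 - (3/2) * Real.log t + (3/4) * t + (3/2) * t^3 * Real.log t := by
  have ht' : t ≠ 0 := ne_of_gt ht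
  have hi : t⁻¹ ≠ 0 := inv_ne_zero ht'
  simp only [fSymSG, fSG, Real.log_mul ht' ht', Real.log_mul (mul_ne_zero ht' ht') ht',
    Real.log_mul hi hi, Real.log_mul (mul_ne_zero hi hi) hi, Real.log_inv]
  field_simp
  ring

/-- On the diagonal
`f^Sym(t,t,t) = (3/4)t² − (3/2)log t + (3/4)t + (3/2)t³ log t`; in particular
`f^Sym(1,1,1) = 3/2` while `f^Sym(3/5,3/5,3/5) < 3/2`, so `(1,1,1)` is not a
minimizer: the symmetrized symmetric-gradient energy does not favor
isometry. -/
theorem statement_13 :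
    (∀ t : ℝ, 0 < t → fSymSG t t t =
      (3/4) * t^2 - (3/2) * Real.log t + (3/4) * t + (3/2) * t^3 * Real.log t) ∧
    fSymSG 1 1 1 = 3/2 ∧
    fSymSG (3/5) (3/5) (3/5) < 3/2 ∧
    (∃ a b c : ℝ, 0 < a ∧ 0 < b ∧ 0 < c ∧ fSymSG a b c < fSymSG 1 1 1) := by
  have h1 : fSymSG 1 1 1 = 3/2 := by
    rw [diag 1 one_pos]; simp; norm_num
  have h35 : fSymSG (3/5) (3/5) (3/5) < 3/2 := by
    rw [diag (3/5) (by norm_num)]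
    have hlog : 0 < Real.log (5/3) := Real.log_pos (by norm_num)
    have : Real.log (3/5 : ℝ) = - Real.log (5/3) := by
      rw [← Real.log_inv]; norm_num
    rw [this]
    have hsplit : Real.log (5/3 : ℝ) = Real.log (5/4) + Real.log (4/3) := by
      rw [← Real.log_mul (by norm_num) (by norm_num)]; norm_num
    have b1 : Real.log (5/4 : ℝ) ≤ 5/4 - 1 := Real.log_le_sub_one_of_pos (by norm_num)
    have b2 : Real.log (4/3 : ℝ) ≤ 4/3 - 1 := Real.log_le_sub_one_of_pos (by norm_num)
    nlinarith
  exact ⟨fun t ht => diag t ht, h1, h35, ⟨3/5, 3/5, 3/5, by norm_num, by norm_num,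
    by norm_num, by rw [h1]; exact h35⟩⟩
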